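/- Decoupling inner product identity for the Paninski family under a channel: with p_z the Paninski family with parameter ε on [k] and W a channel from [k] to finite Y with Σ_x W(y|x) > 0, define δ_z^W(y) = (W∘p_z(y) − W∘u(y))/(W∘u(y)). Then for all z, z' ∈ {−1,1}^{k/2}: Σ_y W∘u(y) · δ_z^W(y) · δ_{z'}^W(y) = (4ε²/k) · zᵀ H(W) z'. -/

import Mathlib

/-- The Paninski perturbed family on `[k]` with `k = 2m`. -/
noncomputable def paninski (m : ℕ) (ε : ℝ) (z : Fin m → ℝ) : Fin m × Bool → ℝ :=
  fun x => (1 + (if x.2 then -1 else 1) * 2 * ε * z x.1) / (2 * m)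

/-- The matrix `H(W)` associated to a channel `W` from `[k]` (with `k = 2m`). -/
noncomputable def Hmat {Y : Type*} [Fintype Y] (m : ℕ) (W : Fin m × Bool → Y → ℝ) :
    Matrix (Fin m) (Fin m) ℝ :=
  Matrix.of fun i₁ i₂ => ∑ y,
    (W (i₁, false) y - W (i₁, true) y) * (W (i₂, false) y - W (i₂, true) y) / ∑ x, W x y

lemma pan_sum_aux (m : ℕ) (hm : (m:ℝ) ≠ 0) (ε : ℝ) (z : Fin m → ℝ)
    {Y : Type*} [Fintype Y] (W : Fin m × Bool → Y → ℝ) (y : Y) :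
    ∑ x, paninski m ε z x * W x y
      = (∑ x, W x y) / (2 * m)
        + (ε / m) * ∑ i, z i * (W (i, false) y - W (i, true) y) := by
  have hSW : (∑ x, W x y) = ∑ i : Fin m, (W (i, false) y + W (i, true) y) := by
    rw [Fintype.sum_prod_type]
    exact Finset.sum_congr rfl fun i _ => by simp [Fintype.sum_bool, add_comm]
  rw [hSW, Fintype.sum_prod_type, Finset.mul_sum, Finset.sum_div, ← Finset.sum_add_distrib]
  refine Finset.sum_congr rfl fun i _ => ?_
  simp only [Fintype.sum_bool, paninski]
  field_simp
  simp only [if_true, Bool.false_eq_true, if_false]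
  ring

/-- Decoupling inner product identity:
`Σ_y W∘u(y) δ_z^W(y) δ_{z'}^W(y) = (4ε²/k) zᵀ H(W) z'`. -/
theorem paninski_decoupling_inner_product (m : ℕ) (hm : 0 < m) (ε : ℝ)
    (hε0 : 0 < ε) (hε : ε < 1 / 2)
    {Y : Type*} [Fintype Y] (W : Fin m × Bool → Y → ℝ)
    (hW0 : ∀ x y, 0 ≤ W x y) (hW1 : ∀ x, ∑ y, W x y = 1)
    (hWy : ∀ y, 0 < ∑ x, W x y)
    (z z' : Fin m → ℝ) (hz : ∀ i, z i = 1 ∨ z i = -1) (hz' : ∀ i, z' i = 1 ∨ z' i = -1) :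
    ∑ y, (∑ x, (1 / (2 * m : ℝ)) * W x y)
        * (((∑ x, paninski m ε z x * W x y) - ∑ x, (1 / (2 * m : ℝ)) * W x y)
            / ∑ x, (1 / (2 * m : ℝ)) * W x y)
        * (((∑ x, paninski m ε z' x * W x y) - ∑ x, (1 / (2 * m : ℝ)) * W x y)
            / ∑ x, (1 / (2 * m : ℝ)) * W x y)
      = (4 * ε ^ 2 / (2 * m)) * ∑ i₁, ∑ i₂, z i₁ * Hmat m W i₁ i₂ * z' i₂ := by
  have hmR : (m:ℝ) ≠ 0 := Nat.cast_ne_zero.mpr hm.ne'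
  have key : ∀ y, (∑ x, (1 / (2 * m : ℝ)) * W x y)
        * (((∑ x, paninski m ε z x * W x y) - ∑ x, (1 / (2 * m : ℝ)) * W x y)
            / ∑ x, (1 / (2 * m : ℝ)) * W x y)
        * (((∑ x, paninski m ε z' x * W x y) - ∑ x, (1 / (2 * m : ℝ)) * W x y)
            / ∑ x, (1 / (2 * m : ℝ)) * W x y)
      = (4 * ε ^ 2 / (2 * m)) * ∑ i₁, ∑ i₂, z i₁ *
          ((W (i₁, false) y - W (i₁, true) y) * (W (i₂, false) y - W (i₂, true) y)
            / ∑ x, W x y) * z' i₂ := by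
    intro y
    have hS : (0:ℝ) < ∑ x, W x y := hWy y
    have hA : ∑ x, (1 / (2 * m : ℝ)) * W x y = (∑ x, W x y) / (2 * m) := by
      rw [← Finset.mul_sum]; ring
    rw [hA, pan_sum_aux m hmR ε z W y, pan_sum_aux m hmR ε z' W y]
    have e1 : ∀ (w : Fin m → ℝ),
        (∑ i₁, ∑ i₂, w i₁ *
          ((W (i₁, false) y - W (i₁, true) y) * (W (i₂, false) y - W (i₂, true) y)
            / ∑ x, W x y) * z' i₂)
        = (∑ i, w i * (W (i, false) y - W (i, true) y))
          * (∑ i, z' i * (W (i, false) y - W (i, true) y)) / (∑ x, W x y) := by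
      intro w
      rw [Finset.sum_mul, Finset.sum_div]
      refine Finset.sum_congr rfl fun i _ => ?_
      rw [Finset.mul_sum, Finset.sum_div]
      refine Finset.sum_congr rfl fun j _ => ?_
      field_simp
    rw [e1]
    field_simp
    ring
  rw [Finset.sum_congr rfl fun y _ => key y, ← Finset.mul_sum]
  congr 1
  rw [Finset.sum_comm]
  refine Finset.sum_congr rfl fun i₁ _ => ?_
  rw [Finset.sum_comm]
  refine Finset.sum_congr rfl fun i₂ _ => ?_
  simp only [Hmat, Matrix.of_apply, Finset.mul_sum, Finset.sum_mul]
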